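/- Let λ, λ′ ∈ (0, 1/2) and let μ₁ ≠ μ₂ and μ₁′ ≠ μ₂′ be real numbers. If for all t ∈ ℝ one has λλ′ sin((μ₁−μ₁′)t) + λ(1−λ′) sin((μ₁−μ₂′)t) + (1−λ)λ′ sin((μ₂−μ₁′)t) + (1−λ)(1−λ′) sin((μ₂−μ₂′)t) = 0, then λ = λ′, μ₁ = μ₁′ and μ₂ = μ₂′. -/

import Mathlib

private lemma hasDerivAt_sin_mul (c x t : ℝ) :
    HasDerivAt (fun s : ℝ => c * Real.sin (x * s)) (c * x * Real.cos (x * t)) t := by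
  have h1 : HasDerivAt (fun s : ℝ => x * s) x t := by
    simpa using (hasDerivAt_id t).const_mul x
  have h2 : HasDerivAt (fun s : ℝ => Real.sin (x * s)) (Real.cos (x * t) * x) t :=
    (Real.hasDerivAt_sin (x * t)).comp t h1
  have h3 := h2.const_mul c
  exact h3.congr_deriv (by ring)

private lemma hasDerivAt_cos_mul (c x t : ℝ) :
    HasDerivAt (fun s : ℝ => c * Real.cos (x * s)) (-(c * x * Real.sin (x * t))) t := by
  have h1 : HasDerivAt (fun s : ℝ => x * s) x t := by
    simpa using (hasDerivAt_id t).const_mul x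
  have h2 : HasDerivAt (fun s : ℝ => Real.cos (x * s)) (-Real.sin (x * t) * x) t :=
    (Real.hasDerivAt_cos (x * t)).comp t h1
  have h3 := h2.const_mul c
  exact h3.congr_deriv (by ring)

private lemma step_sc (c₁ c₂ c₃ c₄ x₁ x₂ x₃ x₄ : ℝ)
    (h : ∀ t, c₁ * Real.sin (x₁ * t) + c₂ * Real.sin (x₂ * t)
      + c₃ * Real.sin (x₃ * t) + c₄ * Real.sin (x₄ * t) = 0) :
    ∀ t, c₁ * x₁ * Real.cos (x₁ * t) + c₂ * x₂ * Real.cos (x₂ * t)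
      + c₃ * x₃ * Real.cos (x₃ * t) + c₄ * x₄ * Real.cos (x₄ * t) = 0 := by
  intro t
  have H : HasDerivAt (fun s => c₁ * Real.sin (x₁ * s) + c₂ * Real.sin (x₂ * s)
      + c₃ * Real.sin (x₃ * s) + c₄ * Real.sin (x₄ * s))
      (c₁ * x₁ * Real.cos (x₁ * t) + c₂ * x₂ * Real.cos (x₂ * t)
      + c₃ * x₃ * Real.cos (x₃ * t) + c₄ * x₄ * Real.cos (x₄ * t)) t :=
    (((hasDerivAt_sin_mul c₁ x₁ t).add (hasDerivAt_sin_mul c₂ x₂ t)).add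
      (hasDerivAt_sin_mul c₃ x₃ t)).add (hasDerivAt_sin_mul c₄ x₄ t)
  have h0 : (fun s => c₁ * Real.sin (x₁ * s) + c₂ * Real.sin (x₂ * s)
      + c₃ * Real.sin (x₃ * s) + c₄ * Real.sin (x₄ * s)) = fun _ => (0 : ℝ) := funext h
  rw [h0] at H
  exact H.unique (hasDerivAt_const t 0)

private lemma step_cs (c₁ c₂ c₃ c₄ x₁ x₂ x₃ x₄ : ℝ)
    (h : ∀ t, c₁ * Real.cos (x₁ * t) + c₂ * Real.cos (x₂ * t)
      + c₃ * Real.cos (x₃ * t) + c₄ * Real.cos (x₄ * t) = 0) :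
    ∀ t, c₁ * x₁ * Real.sin (x₁ * t) + c₂ * x₂ * Real.sin (x₂ * t)
      + c₃ * x₃ * Real.sin (x₃ * t) + c₄ * x₄ * Real.sin (x₄ * t) = 0 := by
  intro t
  have H : HasDerivAt (fun s => c₁ * Real.cos (x₁ * s) + c₂ * Real.cos (x₂ * s)
      + c₃ * Real.cos (x₃ * s) + c₄ * Real.cos (x₄ * s))
      (-(c₁ * x₁ * Real.sin (x₁ * t)) + -(c₂ * x₂ * Real.sin (x₂ * t))
      + -(c₃ * x₃ * Real.sin (x₃ * t)) + -(c₄ * x₄ * Real.sin (x₄ * t))) t :=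
    (((hasDerivAt_cos_mul c₁ x₁ t).add (hasDerivAt_cos_mul c₂ x₂ t)).add
      (hasDerivAt_cos_mul c₃ x₃ t)).add (hasDerivAt_cos_mul c₄ x₄ t)
  have h0 : (fun s => c₁ * Real.cos (x₁ * s) + c₂ * Real.cos (x₂ * s)
      + c₃ * Real.cos (x₃ * s) + c₄ * Real.cos (x₄ * s)) = fun _ => (0 : ℝ) := funext h
  rw [h0] at H
  have := H.unique (hasDerivAt_const t 0)
  linarith

private lemma aux_ident (l l' d p q : ℝ) (hl : 0 < l) (hl2 : l < 1/2)
    (hl' : 0 < l') (hl2' : l' < 1/2) (hp : p ≠ 0) (hq : q ≠ 0)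
    (E0 : l*l'*(d+p+q) + l*(1-l')*(d+p) + (1-l)*l'*(d+q) + (1-l)*(1-l')*d = 0)
    (E1 : l*l'*(d+p+q)^3 + l*(1-l')*(d+p)^3 + (1-l)*l'*(d+q)^3 + (1-l)*(1-l')*d^3 = 0)
    (E2 : l*l'*(d+p+q)^5 + l*(1-l')*(d+p)^5 + (1-l)*l'*(d+q)^5 + (1-l)*(1-l')*d^5 = 0)
    (E3 : l*l'*(d+p+q)^7 + l*(1-l')*(d+p)^7 + (1-l)*l'*(d+q)^7 + (1-l)*(1-l')*d^7 = 0) :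
    d = 0 ∧ p + q = 0 ∧ l = l' := by
  by_cases hd : d = 0
  · subst hd
    by_cases hpq : p + q = 0
    · refine ⟨rfl, hpq, ?_⟩
      have hq' : q = -p := by linarith
      subst hq'
      have key : p * (l - l') = 0 := by linear_combination E0
      rcases mul_eq_zero.mp key with h | h
      · exact absurd h hp
      · linarith
    · exfalso
      by_cases hq2 : q = -(2*p)
      · subst hq2
        have key : l * (1 - 2*l') * p^7 = 0 := by
          linear_combination (-1/3)*E3 + (4/3)*p^2*E2
        exact (mul_ne_zero (mul_ne_zero (ne_of_gt hl) (by linarith : (1:ℝ) - 2*l' ≠ 0))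
          (pow_ne_zero 7 hp)) key
      · by_cases hp2 : p = -(2*q)
        · subst hp2
          have key : l' * (1 - 2*l) * q^7 = 0 := by
            linear_combination (-1/3)*E3 + (4/3)*q^2*E2
          exact (mul_ne_zero (mul_ne_zero (ne_of_gt hl') (by linarith : (1:ℝ) - 2*l ≠ 0))
            (pow_ne_zero 7 hq)) key
        · have key : l*l'*(p+q)^3 * (p*(p+2*q)) * (q*(q+2*p)) = 0 := by
            linear_combination E3 - (p^2+q^2)*E2 + (p^2*q^2)*E1
          have h1 : p + 2*q ≠ 0 := fun h => hp2 (by linarith)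
          have h2 : q + 2*p ≠ 0 := fun h => hq2 (by linarith)
          exact (mul_ne_zero (mul_ne_zero (mul_ne_zero (mul_ne_zero (ne_of_gt hl)
            (ne_of_gt hl')) (pow_ne_zero 3 hpq)) (mul_ne_zero hp h1))
            (mul_ne_zero hq h2)) key
  · exfalso
    by_cases hpq : p + q = 0
    · have hq' : q = -p := by linarith
      subst hq'
      by_cases hp2 : p = -(2*d)
      · subst hp2
        have key : (1-l) * l' * d^7 = 0 := by
          linear_combination (1/1536)*(E3 - 3*d^2*E2 + 3*d^4*E1 - d^6*E0)
        exact (mul_ne_zero (mul_ne_zero (by linarith : (1:ℝ) - l ≠ 0) (ne_of_gt hl'))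
          (pow_ne_zero 7 hd)) key
      · by_cases hp2' : p = 2*d
        · subst hp2'
          have key : l * (1-l') * d^7 = 0 := by
            linear_combination (1/1536)*(E3 - 3*d^2*E2 + 3*d^4*E1 - d^6*E0)
          exact (mul_ne_zero (mul_ne_zero (ne_of_gt hl) (by linarith : (1:ℝ) - l' ≠ 0))
            (pow_ne_zero 7 hd)) key
        · have h2dp : 2*d + p ≠ 0 := fun h => hp2 (by linarith)
          have hp2d : p - 2*d ≠ 0 := fun h => hp2' (by linarith)
          have key2 : (d+p) * (l*(1-l') * (p*(2*d+p))^2 * (4*d*p)) = 0 := by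
            linear_combination E3 - (2*d^2+(d-p)^2)*E2 + (d^4+2*d^2*(d-p)^2)*E1
              - (d^4*(d-p)^2)*E0
          have key3 : (d-p) * ((1-l)*l' * (p*(p-2*d))^2 * (-(4*d*p))) = 0 := by
            linear_combination E3 - (2*d^2+(d+p)^2)*E2 + (d^4+2*d^2*(d+p)^2)*E1
              - (d^4*(d+p)^2)*E0
          have hdp : d + p = 0 := by
            rcases mul_eq_zero.mp key2 with h | h
            · exact h
            · exact absurd h (mul_ne_zero (mul_ne_zero
                (mul_ne_zero (ne_of_gt hl) (by linarith : (1:ℝ) - l' ≠ 0))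
                (pow_ne_zero 2 (mul_ne_zero hp h2dp)))
                (mul_ne_zero (mul_ne_zero (by norm_num : (4:ℝ) ≠ 0) hd) hp))
          have hdp' : d - p = 0 := by
            rcases mul_eq_zero.mp key3 with h | h
            · exact h
            · refine absurd h (mul_ne_zero (mul_ne_zero
                (mul_ne_zero (by linarith : (1:ℝ) - l ≠ 0) (ne_of_gt hl'))
                (pow_ne_zero 2 (mul_ne_zero hp hp2d))) ?_)
              simpa using (mul_ne_zero (mul_ne_zero (by norm_num : (4:ℝ) ≠ 0) hd) hp)
          exact hd (by linarith)
    · by_cases hp2 : p = -(2*d)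
      · subst hp2
        by_cases hq2 : q = -(2*d)
        · subst hq2
          have key : l * l' * d^7 = 0 := by
            linear_combination (-1/1536)*(E3 - 3*d^2*E2 + 3*d^4*E1 - d^6*E0)
          exact (mul_ne_zero (mul_ne_zero (ne_of_gt hl) (ne_of_gt hl'))
            (pow_ne_zero 7 hd)) key
        · have hq2d : q - 2*d ≠ 0 := fun h => hpq (by linarith)
          have hq2d' : q + 2*d ≠ 0 := fun h => hq2 (by linarith)
          have key : (1-l') * (1-2*l) * (d * (q*(q-2*d)) * (q*(q+2*d))^2) = 0 := by
            linear_combination (-1)*(E3 - ((q-d)^2+2*(d+q)^2)*E2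
              + (2*(q-d)^2*(d+q)^2 + (d+q)^4)*E1 - ((q-d)^2*(d+q)^4)*E0)
          exact (mul_ne_zero (mul_ne_zero (by linarith : (1:ℝ) - l' ≠ 0)
            (by linarith : (1:ℝ) - 2*l ≠ 0))
            (mul_ne_zero (mul_ne_zero hd (mul_ne_zero hq hq2d))
              (pow_ne_zero 2 (mul_ne_zero hq hq2d')))) key
      · by_cases hq2 : q = -(2*d)
        · subst hq2
          have hp2d : p - 2*d ≠ 0 := fun h => hpq (by linarith)
          have hp2d' : p + 2*d ≠ 0 := fun h => hp2 (by linarith)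
          have key : (1-l) * (1-2*l') * (d * (p*(p-2*d)) * (p*(p+2*d))^2) = 0 := by
            linear_combination (-1)*(E3 - ((p-d)^2+2*(d+p)^2)*E2
              + (2*(p-d)^2*(d+p)^2 + (d+p)^4)*E1 - ((p-d)^2*(d+p)^4)*E0)
          exact (mul_ne_zero (mul_ne_zero (by linarith : (1:ℝ) - l ≠ 0)
            (by linarith : (1:ℝ) - 2*l' ≠ 0))
            (mul_ne_zero (mul_ne_zero hd (mul_ne_zero hp hp2d))
              (pow_ne_zero 2 (mul_ne_zero hp hp2d')))) key
        · by_cases hpq2 : p + q = -(2*d)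
          · have hq' : q = -(2*d) - p := by linarith
            subst hq'
            have hp2d : p + 2*d ≠ 0 := fun h => hp2 (by linarith)
            have hq2d : 2*d + p ≠ 0 := fun h => hp2 (by linarith)
            have hqq : -(2*d) - p ≠ 0 := fun h => hq (by linarith)
            have hqq2 : -(2*d) - p + 2*d ≠ 0 := fun h => hp (by linarith)
            have key : ((1-l)*(1-l') - l*l')
                * (d * (p*(p+2*d)) * (((-(2*d)-p))*((-(2*d)-p)+2*d))^2) = 0 := by
              linear_combination (-1)*(E3 - ((d+p)^2+2*(d+(-(2*d)-p))^2)*E2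
                + (2*(d+p)^2*(d+(-(2*d)-p))^2 + (d+(-(2*d)-p))^4)*E1
                - ((d+p)^2*(d+(-(2*d)-p))^4)*E0)
            have hpos : (1-l)*(1-l') - l*l' ≠ 0 := by nlinarith
            exact (mul_ne_zero hpos (mul_ne_zero (mul_ne_zero hd
              (mul_ne_zero hp hp2d)) (pow_ne_zero 2 (mul_ne_zero hqq hqq2)))) key
          · have hp2d : p + 2*d ≠ 0 := fun h => hp2 (by linarith)
            have hq2d : q + 2*d ≠ 0 := fun h => hq2 (by linarith)
            have hpq2d : p + q + 2*d ≠ 0 := fun h => hpq2 (by linarith)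
            have key : (1-l)*(1-l')
                * (d * ((p+q)*(p+q+2*d)) * (p*(p+2*d)) * (q*(q+2*d))) = 0 := by
              linear_combination (-1)*(E3 - ((d+p+q)^2+(d+p)^2+(d+q)^2)*E2
                + ((d+p+q)^2*(d+p)^2+(d+p+q)^2*(d+q)^2+(d+p)^2*(d+q)^2)*E1
                - ((d+p+q)^2*(d+p)^2*(d+q)^2)*E0)
            exact (mul_ne_zero (mul_ne_zero (by linarith : (1:ℝ) - l ≠ 0)
              (by linarith : (1:ℝ) - l' ≠ 0))
              (mul_ne_zero (mul_ne_zero (mul_ne_zero hd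
                (mul_ne_zero hpq hpq2d)) (mul_ne_zero hp hp2d))
                (mul_ne_zero hq hq2d))) key

/-- Parametric identifiability: if the sine combination vanishes identically, the two
parameter triples coincide. -/
theorem stmt_3 (lam lam' mu₁ mu₂ mu₁' mu₂' : ℝ)
    (hlam : lam ∈ Set.Ioo (0 : ℝ) (1 / 2)) (hlam' : lam' ∈ Set.Ioo (0 : ℝ) (1 / 2))
    (hmu : mu₁ ≠ mu₂) (hmu' : mu₁' ≠ mu₂')
    (h : ∀ t : ℝ,
      lam * lam' * Real.sin ((mu₁ - mu₁') * t)
        + lam * (1 - lam') * Real.sin ((mu₁ - mu₂') * t)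
        + (1 - lam) * lam' * Real.sin ((mu₂ - mu₁') * t)
        + (1 - lam) * (1 - lam') * Real.sin ((mu₂ - mu₂') * t) = 0) :
    lam = lam' ∧ mu₁ = mu₁' ∧ mu₂ = mu₂' := by
  obtain ⟨hl0, hl2⟩ := hlam
  obtain ⟨hl0', hl2'⟩ := hlam'
  set x₁ := mu₁ - mu₁' with hx₁
  set x₂ := mu₁ - mu₂' with hx₂
  set x₃ := mu₂ - mu₁' with hx₃
  set x₄ := mu₂ - mu₂' with hx₄
  have h1 := step_sc _ _ _ _ _ _ _ _ h
  have h2 := step_cs _ _ _ _ _ _ _ _ h1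
  have h3 := step_sc _ _ _ _ _ _ _ _ h2
  have h4 := step_cs _ _ _ _ _ _ _ _ h3
  have h5 := step_sc _ _ _ _ _ _ _ _ h4
  have h6 := step_cs _ _ _ _ _ _ _ _ h5
  have h7 := step_sc _ _ _ _ _ _ _ _ h6
  have E0 : lam*lam'*x₁ + lam*(1-lam')*x₂ + (1-lam)*lam'*x₃ + (1-lam)*(1-lam')*x₄ = 0 := by
    have := h1 0; simp at this; linear_combination this
  have E1 : lam*lam'*x₁^3 + lam*(1-lam')*x₂^3 + (1-lam)*lam'*x₃^3
      + (1-lam)*(1-lam')*x₄^3 = 0 := by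
    have := h3 0; simp at this; linear_combination this
  have E2 : lam*lam'*x₁^5 + lam*(1-lam')*x₂^5 + (1-lam)*lam'*x₃^5
      + (1-lam)*(1-lam')*x₄^5 = 0 := by
    have := h5 0; simp at this; linear_combination this
  have E3 : lam*lam'*x₁^7 + lam*(1-lam')*x₂^7 + (1-lam)*lam'*x₃^7
      + (1-lam)*(1-lam')*x₄^7 = 0 := by
    have := h7 0; simp at this; linear_combination this
  have hp : mu₁ - mu₂ ≠ 0 := sub_ne_zero.mpr hmu
  have hq : mu₂' - mu₁' ≠ 0 := sub_ne_zero.mpr (Ne.symm hmu')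
  obtain ⟨hd0, hpq0, hll⟩ := aux_ident lam lam' (mu₂ - mu₂') (mu₁ - mu₂) (mu₂' - mu₁')
    hl0 hl2 hl0' hl2' hp hq
    (by linear_combination E0) (by linear_combination E1)
    (by linear_combination E2) (by linear_combination E3)
  exact ⟨hll, by linarith, by linarith⟩
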